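/- arXiv:1901.01168 — 2 statements merged into one kernel-verified Lean document; each statement's English description precedes it below -/
import Mathlib

section
/- Let a₀ : (0,∞) → (0,∞) be continuous with t ↦ a₀(t)·t strictly increasing on (0,∞) and a₀(t)·t → 0 as t → 0⁺. Define a : ℝᴺ → ℝᴺ by a(y) = a₀(|y|)·y for y ≠ 0 and a(0) = 0. Then a is continuous on ℝᴺ and strictly monotone, i.e., (a(y) − a(y'), y − y') > 0 for all y ≠ y'. -/
open Set Filter


private lemma inner_self_pos' {E : Type*} [NormedAddCommGroup E]
    [InnerProductSpace ℝ E] {x : E} (hx : x ≠ 0) : 0 < (inner ℝ x x : ℝ) := by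
  rw [real_inner_self_eq_norm_sq]
  have : 0 < ‖x‖ := norm_pos_iff.mpr hx
  positivity

theorem stmt1 (N : ℕ) (hN : 1 ≤ N) (a₀ : ℝ → ℝ)
    (ha₀pos : ∀ t > 0, 0 < a₀ t)
    (ha₀cont : ContinuousOn a₀ (Ioi 0))
    (hmono : StrictMonoOn (fun t => a₀ t * t) (Ioi 0))
    (hlim : Tendsto (fun t => a₀ t * t) (nhdsWithin 0 (Ioi 0)) (nhds 0))
    (a : EuclideanSpace ℝ (Fin N) → EuclideanSpace ℝ (Fin N))
    (ha : ∀ y, y ≠ 0 → a y = a₀ ‖y‖ • y) (ha0 : a 0 = 0) :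
    Continuous a ∧ ∀ y y' : EuclideanSpace ℝ (Fin N), y ≠ y' →
      0 < (inner ℝ (a y - a y') (y - y') : ℝ) := by
  have hnorm : ∀ y : EuclideanSpace ℝ (Fin N), ‖a y‖ = a₀ ‖y‖ * ‖y‖ := by
    intro y
    by_cases h : y = 0
    · simp [h, ha0]
    · rw [ha y h, norm_smul, Real.norm_eq_abs,
        abs_of_pos (ha₀pos _ (norm_pos_iff.mpr h))]
  constructor
  · rw [continuous_iff_continuousAt]
    intro y
    by_cases h : y = 0
    · subst h
      rw [ContinuousAt, ha0, tendsto_zero_iff_norm_tendsto_zero]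
      have h1 : Tendsto (fun t : ℝ => a₀ t * t) (nhdsWithin 0 (Ici 0)) (nhds 0) := by
        have hI : Ici (0:ℝ) = Ioi 0 ∪ {0} := by
          ext x; simp [le_iff_lt_or_eq, or_comm, eq_comm]
        rw [hI, nhdsWithin_union, tendsto_sup]
        refine ⟨hlim, ?_⟩
        rw [nhdsWithin_singleton]
        simpa using tendsto_pure_nhds (fun t : ℝ => a₀ t * t) 0
      have h2 : Tendsto (fun y : EuclideanSpace ℝ (Fin N) => ‖y‖)
          (nhds 0) (nhdsWithin 0 (Ici 0)) := by
        apply tendsto_nhdsWithin_of_tendsto_nhds_of_eventually_within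
        · exact continuous_norm.tendsto' 0 0 norm_zero
        · exact Eventually.of_forall fun y => norm_nonneg y
      exact (h1.comp h2).congr fun y => (hnorm y).symm
    · have h1 : ContinuousAt a₀ ‖y‖ :=
        ha₀cont.continuousAt (isOpen_Ioi.mem_nhds (norm_pos_iff.mpr h))
      have hU : ContinuousAt (fun x : EuclideanSpace ℝ (Fin N) => a₀ ‖x‖ • x) y :=
        (h1.comp continuous_norm.continuousAt).smul continuousAt_id
      apply hU.congr
      filter_upwards [isOpen_compl_singleton.mem_nhds (by simpa using h :
          y ∈ ({0} : Set (EuclideanSpace ℝ (Fin N)))ᶜ)] with x hx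
      exact (ha x (by simpa using hx)).symm
  · intro y y' hne
    by_cases hy' : y' = 0
    · subst hy'
      rw [ha0, sub_zero, sub_zero, ha y hne, real_inner_smul_left]
      exact mul_pos (ha₀pos _ (norm_pos_iff.mpr hne))
        (inner_self_pos' hne)
    · by_cases hy : y = 0
      · subst hy
        rw [ha0, zero_sub, zero_sub, inner_neg_neg, ha y' hy',
          real_inner_smul_left]
        exact mul_pos (ha₀pos _ (norm_pos_iff.mpr hy'))
          (inner_self_pos' hy')
      · have hr : (0:ℝ) < ‖y‖ := norm_pos_iff.mpr hy
        have hs : (0:ℝ) < ‖y'‖ := norm_pos_iff.mpr hy'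
        by_cases hrs : ‖y‖ = ‖y'‖
        · have hd : a y - a y' = a₀ ‖y‖ • (y - y') := by
            rw [ha y hy, ha y' hy', ← hrs, smul_sub]
          rw [hd, real_inner_smul_left]
          exact mul_pos (ha₀pos _ hr)
            (inner_self_pos' (sub_ne_zero.mpr hne))
        · have hp : (inner ℝ y y' : ℝ) ≤ ‖y‖ * ‖y'‖ := real_inner_le_norm y y'
          have key : 0 < (a₀ ‖y‖ * ‖y‖ - a₀ ‖y'‖ * ‖y'‖) * (‖y‖ - ‖y'‖) := by
            rcases lt_or_gt_of_ne hrs with h | h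
            · have := hmono (mem_Ioi.mpr hr) (mem_Ioi.mpr hs) h
              exact mul_pos_of_neg_of_neg (sub_neg.mpr this) (sub_neg.mpr h)
            · have := hmono (mem_Ioi.mpr hs) (mem_Ioi.mpr hr) h
              exact mul_pos (sub_pos.mpr this) (sub_pos.mpr h)
          rw [ha y hy, ha y' hy']
          have expand : (inner ℝ (a₀ ‖y‖ • y - a₀ ‖y'‖ • y') (y - y') : ℝ) =
              a₀ ‖y‖ * ‖y‖ ^ 2 + a₀ ‖y'‖ * ‖y'‖ ^ 2 -
                (a₀ ‖y‖ + a₀ ‖y'‖) * (inner ℝ y y' : ℝ) := by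
            simp only [inner_sub_left, inner_sub_right, real_inner_smul_left,
              real_inner_self_eq_norm_sq, real_inner_comm y' y]
            ring
          rw [expand]
          have h4 := ha₀pos _ hr
          have h5 := ha₀pos _ hs
          nlinarith [mul_nonneg (by linarith : (0:ℝ) ≤ a₀ ‖y‖ + a₀ ‖y'‖)
            (sub_nonneg.mpr hp)]
end

section
/- Let a : ℝᴺ → ℝᴺ be C¹ on ℝᴺ \ {0} with a(0) = 0 and suppose (∇a(y)ξ, ξ) ≥ (θ(|y|)/|y|)|ξ|² for all y ≠ 0 and all ξ ∈ ℝᴺ, where θ(t) ≥ c₁ t^{p−1} for all t > 0 with c₁ > 0 and 1 < p < ∞. Then (a(y), y) ≥ (c₁/(p−1)) |y|^p for all y ∈ ℝᴺ. -/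
theorem stmt4 (N : ℕ) (hN : 1 ≤ N) (p c₁ : ℝ) (hp : 1 < p) (hc₁ : 0 < c₁)
    (θ : ℝ → ℝ) (hθpos : ∀ t > 0, 0 < θ t)
    (hθ : ∀ t > 0, c₁ * t ^ (p - 1) ≤ θ t)
    (a : EuclideanSpace ℝ (Fin N) → EuclideanSpace ℝ (Fin N))
    (A : EuclideanSpace ℝ (Fin N) →
      (EuclideanSpace ℝ (Fin N) →L[ℝ] EuclideanSpace ℝ (Fin N)))
    (hacont : Continuous a) (ha0 : a 0 = 0)
    (hderiv : ∀ y, y ≠ 0 → HasFDerivAt a (A y) y)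
    (hAcont : ContinuousOn A {y | y ≠ 0})
    (hell : ∀ y, y ≠ 0 → ∀ ξ : EuclideanSpace ℝ (Fin N),
      θ ‖y‖ / ‖y‖ * ‖ξ‖ ^ 2 ≤ (inner ℝ (A y ξ) ξ : ℝ)) :
    ∀ y, c₁ / (p - 1) * ‖y‖ ^ p ≤ (inner ℝ (a y) y : ℝ) := by
  intro y
  rcases eq_or_ne y 0 with rfl | hy
  · simp [ha0, Real.zero_rpow (by positivity : p ≠ 0)]
  have hny : 0 < ‖y‖ := norm_pos_iff.mpr hy
  set g : ℝ → ℝ := fun t => inner ℝ (a (t • y)) y with hg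
  have hgc : Continuous g := by
    exact (hacont.comp (continuous_id.smul continuous_const)).inner continuous_const
  have hg' : ∀ t : ℝ, 0 < t → HasDerivAt g (inner ℝ (A (t • y) y) y : ℝ) t := by
    intro t ht
    have hty : t • y ≠ 0 := smul_ne_zero (ne_of_gt ht) hy
    have h1 : HasDerivAt (fun s : ℝ => s • y) y t := by
      simpa using (hasDerivAt_id t).smul_const y
    have h2 : HasDerivAt (fun s : ℝ => a (s • y)) (A (t • y) y) t :=
      (hderiv (t • y) hty).comp_hasDerivAt t h1
    have h3 := h2.inner ℝ (hasDerivAt_const t y)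
    simpa using h3
  -- pointwise lower bound on the derivative
  have hlb : ∀ t : ℝ, 0 < t → c₁ * t ^ (p - 2) * ‖y‖ ^ p ≤ (inner ℝ (A (t • y) y) y : ℝ) := by
    intro t ht
    have hty : t • y ≠ 0 := smul_ne_zero (ne_of_gt ht) hy
    have hnt : ‖t • y‖ = t * ‖y‖ := by
      rw [norm_smul, Real.norm_eq_abs, abs_of_pos ht]
    have h1 := hell (t • y) hty y
    have h2 : c₁ * (t * ‖y‖) ^ (p - 1) / (t * ‖y‖) * ‖y‖ ^ 2 ≤
        θ ‖t • y‖ / ‖t • y‖ * ‖y‖ ^ 2 := by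
      rw [hnt]
      apply mul_le_mul_of_nonneg_right _ (by positivity)
      apply div_le_div_of_nonneg_right (hθ _ (by positivity)) (by positivity)
    refine le_trans (le_of_eq ?_) (le_trans h2 h1)
    have hpos : (0:ℝ) < t * ‖y‖ := by positivity
    have hdiv : (t * ‖y‖) ^ (p - 1) / (t * ‖y‖) = (t * ‖y‖) ^ (p - 2) := by
      rw [show p - 2 = (p - 1) - 1 by ring]
      exact (Real.rpow_sub_one hpos.ne' _).symm
    have hyp2 : ‖y‖ ^ p = ‖y‖ ^ (p - 2) * ‖y‖ ^ (2:ℕ) := by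
      rw [← Real.rpow_natCast ‖y‖ 2, ← Real.rpow_add hny]
      congr 1
      push_cast
      ring
    rw [mul_div_assoc, hdiv, Real.mul_rpow (le_of_lt ht) (le_of_lt hny), hyp2]
    ring
  -- key inequality for ε ∈ (0,1)
  have key : ∀ ε ∈ Set.Ioo (0:ℝ) 1,
      g ε + c₁ * ‖y‖ ^ p * ((1 - ε ^ (p - 1)) / (p - 1)) ≤ (inner ℝ (a y) y : ℝ) := by
    intro ε hε
    obtain ⟨hε0, hε1⟩ := hε
    have hpos : ∀ t ∈ Set.uIcc ε 1, 0 < t := by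
      intro t ht
      rw [Set.uIcc_of_le (le_of_lt hε1)] at ht
      exact lt_of_lt_of_le hε0 ht.1
    have hcontA : ContinuousOn (fun t : ℝ => (inner ℝ (A (t • y) y) y : ℝ)) (Set.uIcc ε 1) := by
      apply ContinuousOn.inner _ continuousOn_const
      apply ContinuousOn.clm_apply _ continuousOn_const
      apply hAcont.comp (continuous_id.smul continuous_const).continuousOn
      intro t ht
      exact smul_ne_zero (ne_of_gt (hpos t ht)) hy
    have hInt : IntervalIntegrable (fun t : ℝ => (inner ℝ (A (t • y) y) y : ℝ))
        MeasureTheory.volume ε 1 := hcontA.intervalIntegrable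
    have hInt2 : IntervalIntegrable (fun t : ℝ => c₁ * t ^ (p - 2) * ‖y‖ ^ p)
        MeasureTheory.volume ε 1 := by
      apply ContinuousOn.intervalIntegrable
      apply ContinuousOn.mul _ continuousOn_const
      apply ContinuousOn.mul continuousOn_const
      intro t ht
      exact (Real.continuousAt_rpow_const t (p-2) (Or.inl (ne_of_gt (hpos t ht)))).continuousWithinAt
    have hFTC : ∫ t in ε..1, (inner ℝ (A (t • y) y) y : ℝ) = g 1 - g ε := by
      apply intervalIntegral.integral_eq_sub_of_hasDerivAt _ hInt
      intro t ht
      exact hg' t (hpos t ht)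
    have hmono : ∫ t in ε..1, c₁ * t ^ (p - 2) * ‖y‖ ^ p ≤
        ∫ t in ε..1, (inner ℝ (A (t • y) y) y : ℝ) := by
      apply intervalIntegral.integral_mono_on (le_of_lt hε1) hInt2 hInt
      intro t ht
      exact hlb t (lt_of_lt_of_le hε0 ht.1)
    have hcalc : ∫ t in ε..1, c₁ * t ^ (p - 2) * ‖y‖ ^ p
        = c₁ * ‖y‖ ^ p * ((1 - ε ^ (p - 1)) / (p - 1)) := by
      have : ∫ t in ε..1, c₁ * t ^ (p - 2) * ‖y‖ ^ p
          = (c₁ * ‖y‖ ^ p) * ∫ t in ε..1, t ^ (p - 2) := by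
        rw [← intervalIntegral.integral_const_mul]
        congr 1; ext t; ring
      rw [this, integral_rpow (Or.inl (by linarith))]
      have h21 : p - 2 + 1 = p - 1 := by ring
      rw [h21, Real.one_rpow]
    have hg1 : g 1 = (inner ℝ (a y) y : ℝ) := by simp [hg]
    linarith [hmono, hcalc ▸ hmono]
  -- take the limit ε → 0⁺
  have hlim : Filter.Tendsto (fun ε : ℝ => g ε + c₁ * ‖y‖ ^ p * ((1 - ε ^ (p - 1)) / (p - 1)))
      (nhdsWithin 0 (Set.Ioi 0)) (nhds (c₁ / (p - 1) * ‖y‖ ^ p)) := by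
    have h1 : Filter.Tendsto g (nhdsWithin 0 (Set.Ioi 0)) (nhds 0) := by
      have h := (hgc.tendsto 0).mono_left (nhdsWithin_le_nhds (s := Set.Ioi 0))
      simpa [hg, ha0] using h
    have h2 : Filter.Tendsto (fun ε : ℝ => ε ^ (p - 1)) (nhdsWithin 0 (Set.Ioi 0)) (nhds 0) := by
      have := (Real.continuousAt_rpow_const 0 (p - 1) (Or.inr (by linarith))).tendsto
      rw [Real.zero_rpow (by linarith : p - 1 ≠ 0)] at this
      exact this.mono_left nhdsWithin_le_nhds
    have h3 : Filter.Tendsto (fun ε : ℝ => g ε + c₁ * ‖y‖ ^ p * ((1 - ε ^ (p - 1)) / (p - 1)))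
        (nhdsWithin 0 (Set.Ioi 0))
        (nhds (0 + c₁ * ‖y‖ ^ p * ((1 - 0) / (p - 1)))) := by
      exact h1.add (Filter.Tendsto.const_mul _ ((tendsto_const_nhds.sub h2).div_const (p-1)))
    convert h3 using 2
    ring
  refine le_of_tendsto hlim ?_
  filter_upwards [Ioo_mem_nhdsGT_of_mem (by norm_num : (0:ℝ) ∈ Set.Ico 0 1)] with ε hε
  exact key ε hε
end
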